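/- Let A_1, ..., A_n be finite-dimensional subspaces of a finite-dimensional algebra H such that H equals the span of products A_1 A_2 ... A_n and dim H = (dim A_1)(dim A_2)...(dim A_n). Then for any 1 ≤ t ≤ t+l ≤ n, the multiplication map from A_t ⊗ A_{t+1} ⊗ ... ⊗ A_{t+l} onto the span A_t A_{t+1} ... A_{t+l} is bijective. -/

import Mathlib

open TensorProduct Pointwise
section aux
variable {k H : Type*} [Field k] [Ring H] [Algebra k H]



lemma aux_span_prod : ∀ (m : ℕ) (U : Fin m → Submodule k H),
    Submodule.span k (Set.range fun x : Π i, U i => (List.ofFn fun i => (x i : H)).prod)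
      = (List.ofFn U).prod := by
  intro m
  induction m with
  | zero =>
      intro U
      have : (Set.range fun x : Π i, U i => (List.ofFn fun i => (x i : H)).prod) = {1} := by
        ext y
        constructor
        · rintro ⟨x, rfl⟩; simp
        · rintro rfl; exact ⟨fun i => i.elim0, by simp⟩
      rw [this, List.ofFn_zero, List.prod_nil, Submodule.one_eq_span]
  | succ m ih =>
      intro U
      rw [List.ofFn_succ, List.prod_cons, ← ih (fun i => U i.succ)]
      apply le_antisymm
      · rw [Submodule.span_le]
        rintro _ ⟨x, rfl⟩
        simp only [List.ofFn_succ, List.prod_cons]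
        exact Submodule.mul_mem_mul (x 0).2
          (Submodule.subset_span ⟨fun i => x i.succ, rfl⟩)
      · rw [Submodule.mul_le]
        intro a ha b hb
        refine Submodule.span_induction ?_ ?_ ?_ ?_ hb
        · rintro _ ⟨y, rfl⟩
          refine Submodule.subset_span ⟨Fin.cons ⟨a, ha⟩ y, ?_⟩
          simp only [List.ofFn_succ, List.prod_cons, Fin.cons_zero, Fin.cons_succ]
        · simp
        · intro b1 b2 _ _ h1 h2
          rw [mul_add]; exact Submodule.add_mem _ h1 h2
        · intro c b1 _ h1
          rw [mul_smul_comm]; exact Submodule.smul_mem _ _ h1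



lemma aux_exists_span (A : Submodule k H) [FiniteDimensional k H] :
    ∃ s : Finset H, Submodule.span k (s : Set H) = A ∧ s.card ≤ Module.finrank k A := by
  classical
  let b := Module.finBasis k A
  refine ⟨Finset.image (fun i => (b i : H)) Finset.univ, ?_, ?_⟩
  · rw [Finset.coe_image, Finset.coe_univ, Set.image_univ]
    have h1 : Set.range (fun i => (b i : H)) = A.subtype '' Set.range b := by
      rw [← Set.range_comp]; rfl
    rw [h1, ← Submodule.map_span, b.span_eq, Submodule.map_subtype_top]
  · exact (Finset.card_image_le).trans (by simp)

lemma aux_finrank_mul_le [FiniteDimensional k H] (A B : Submodule k H) :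
    Module.finrank k ↥(A * B) ≤ Module.finrank k A * Module.finrank k B := by
  classical
  obtain ⟨s, hs, hsc⟩ := aux_exists_span A
  obtain ⟨u, hu, huc⟩ := aux_exists_span B
  have hAB : A * B = Submodule.span k ((s * u : Finset H) : Set H) := by
    rw [← hs, ← hu, Submodule.span_mul_span, ← Finset.coe_mul]
  rw [hAB]
  calc Module.finrank k ↥(Submodule.span k ((s * u : Finset H) : Set H))
      ≤ (s * u).card := finrank_span_finset_le_card _
    _ ≤ s.card * u.card := Finset.card_mul_le
    _ ≤ _ := Nat.mul_le_mul hsc huc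

lemma aux_finrank_list_le [FiniteDimensional k H] (L : List (Submodule k H)) :
    Module.finrank k ↥(L.prod) ≤ (L.map fun S : Submodule k H => Module.finrank k S).prod := by
  induction L with
  | nil =>
      simp only [List.prod_nil, List.map_nil]
      show Module.finrank k ↥(1 : Submodule k H) ≤ 1
      rw [Submodule.one_eq_span]
      have := finrank_span_finset_le_card (R := k) ({(1:H)} : Finset H)
      rw [Finset.coe_singleton, Finset.card_singleton] at this
      exact this
  | cons S L ih =>
      rw [List.prod_cons, List.map_cons, List.prod_cons]
      exact (aux_finrank_mul_le S L.prod).trans (Nat.mul_le_mul_left _ ih)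



lemma aux_piTensor_span [FiniteDimensional k H] (m : ℕ) (U : Fin m → Submodule k H) :
    ∃ S : Set (⨂[k] i : Fin m, ↥(U i)), S.Finite ∧ Submodule.span k S = ⊤ ∧
      ∃ (T : Finset (⨂[k] i : Fin m, ↥(U i))), ↑T = S ∧
        T.card ≤ ∏ i, Module.finrank k (U i) := by
  classical
  let b : ∀ i, Module.Basis (Fin (Module.finrank k (U i))) k (U i) := fun i => Module.finBasis k (U i)
  let g : (Π i, Fin (Module.finrank k (U i))) → (⨂[k] i : Fin m, ↥(U i)) :=
    fun r => PiTensorProduct.tprod k fun i => b i (r i)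
  refine ⟨Set.range g, Set.finite_range g, ?_, Finset.image g Finset.univ, by
    simp [Set.image_univ], (Finset.card_image_le).trans (by simp)⟩
  rw [eq_top_iff, ← PiTensorProduct.span_tprod_eq_top, Submodule.span_le]
  rintro _ ⟨z, rfl⟩
  have hz : z = fun i => ∑ j, (b i).repr (z i) j • b i j :=
    funext fun i => ((b i).sum_repr (z i)).symm
  have : PiTensorProduct.tprod k z
      = ∑ r : Π i, Fin (Module.finrank k (U i)),
        (∏ i, (b i).repr (z i) (r i)) • g r := by
    conv_lhs => rw [hz]
    rw [MultilinearMap.map_sum]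
    exact Finset.sum_congr rfl fun r _ => MultilinearMap.map_smul_univ _ _ _
  rw [this]
  exact Submodule.sum_mem _ fun r _ =>
    Submodule.smul_mem _ _ (Submodule.subset_span ⟨r, rfl⟩)

lemma aux_piTensor_finite [FiniteDimensional k H] (m : ℕ) (U : Fin m → Submodule k H) :
    Module.Finite k (⨂[k] i : Fin m, ↥(U i)) := by
  obtain ⟨S, hSf, hSs, -⟩ := aux_piTensor_span m U
  exact ⟨hSs ▸ Submodule.fg_span hSf⟩

lemma aux_piTensor_finrank_le [FiniteDimensional k H] (m : ℕ) (U : Fin m → Submodule k H) :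
    Module.finrank k (⨂[k] i : Fin m, ↥(U i)) ≤ ∏ i, Module.finrank k (U i) := by
  obtain ⟨S, hSf, hSs, T, hT, hTc⟩ := aux_piTensor_span m U
  have h1 : Module.finrank k ↥(Submodule.span k (T : Set (⨂[k] i : Fin m, ↥(U i)))) ≤ T.card :=
    finrank_span_finset_le_card T
  rw [hT, hSs, finrank_top] at h1
  exact h1.trans hTc

lemma aux_key (n : ℕ) (V : Fin n → Submodule k H) [FiniteDimensional k H]
    (hspan : (List.ofFn V).prod = (⊤ : Submodule k H))
    (hdim : Module.finrank k H = ∏ i, Module.finrank k (V i))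
    (t l : ℕ) (h : t + l + 1 ≤ n)
    (W : Fin (l + 1) → Submodule k H)
    (hW : ∀ i : Fin (l+1), W i = V ⟨t + i, Nat.lt_of_lt_of_le (Nat.add_lt_add_left i.isLt t) h⟩) :
    Module.finrank k ↥((List.ofFn W).prod) = ∏ i, Module.finrank k (W i) := by
  classical
  set D : Submodule k H → ℕ := fun S => Module.finrank k S with hD
  set L : List (Submodule k H) := List.ofFn V with hLdef
  set L1 := L.take t with hL1
  set L2 := (L.drop t).take (l+1) with hL2d
  set L3 := (L.drop t).drop (l+1) with hL3
  have hLn : L.length = n := by simp [hLdef]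
  have hL : L = L1 ++ (L2 ++ L3) := by
    rw [hL2d, hL3, List.take_append_drop, hL1, List.take_append_drop]
  have hL2 : L2 = List.ofFn W := by
    apply List.ext_getElem
    · simp [hL2d, hLn]; omega
    · intro i h1 h2
      simp only [hL2d, List.getElem_take, List.getElem_drop, hLdef, List.getElem_ofFn]
      rw [hW]
  -- dimension identity
  have hb : Module.finrank k H = (L1.map D).prod * ((L2.map D).prod * (L3.map D).prod) := by
    rw [hdim]
    have : (∏ i, Module.finrank k (V i)) = (L.map D).prod := by
      rw [hLdef, List.map_ofFn, Fin.prod_ofFn]; rfl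
    rw [this, hL, List.map_append, List.map_append, List.prod_append, List.prod_append]
  have hprod : L1.prod * (L2.prod * L3.prod) = ⊤ := by
    rw [← List.prod_append, ← List.prod_append, ← hL, hLdef, hspan]
  have ha : Module.finrank k H ≤
      Module.finrank k ↥L1.prod * (Module.finrank k ↥L2.prod * Module.finrank k ↥L3.prod) := by
    have h1 : Module.finrank k H = Module.finrank k ↥(L1.prod * (L2.prod * L3.prod)) := by
      rw [hprod, finrank_top]
    rw [h1]
    refine (aux_finrank_mul_le _ _).trans (Nat.mul_le_mul_left _ ?_)
    exact aux_finrank_mul_le _ _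
  have hE : ∀ M : List (Submodule k H), Module.finrank k ↥M.prod ≤ (M.map D).prod :=
    aux_finrank_list_le
  have hWd : (L2.map D).prod = ∏ i, Module.finrank k (W i) := by
    rw [hL2, List.map_ofFn, Fin.prod_ofFn]; rfl
  have key : Module.finrank k ↥L2.prod = (L2.map D).prod := by
    rcases Nat.eq_zero_or_pos (Module.finrank k H) with h0 | hpos
    · haveI : Subsingleton H := Module.finrank_zero_iff.mp h0
      have hz : Module.finrank k ↥L2.prod = 0 :=
        Nat.le_zero.mp (h0 ▸ Submodule.finrank_le _)
      rw [hz, hWd]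
      refine (Finset.prod_eq_zero (Finset.mem_univ 0) ?_).symm
      have : Subsingleton ↥(W 0) := ⟨fun a b => Subtype.ext (Subsingleton.elim _ _)⟩
      exact Module.finrank_zero_of_subsingleton
    · have e1 := hE L1
      have e2 := hE L2
      have e3 := hE L3
      have hb1 : 0 < (L1.map D).prod := by
        rcases Nat.eq_zero_or_pos (L1.map D).prod with hz | hp
        · rw [hz] at hb; simp at hb; omega
        · exact hp
      have hb3 : 0 < (L3.map D).prod := by
        rcases Nat.eq_zero_or_pos (L3.map D).prod with hz | hp
        · rw [hz] at hb; simp at hb; omega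
        · exact hp
      refine Nat.le_antisymm e2 ?_
      have c1 : (L1.map D).prod * ((L2.map D).prod * (L3.map D).prod)
          ≤ (L1.map D).prod * (Module.finrank k ↥L2.prod * (L3.map D).prod) := by
        calc (L1.map D).prod * ((L2.map D).prod * (L3.map D).prod)
            = Module.finrank k H := hb.symm
          _ ≤ Module.finrank k ↥L1.prod *
              (Module.finrank k ↥L2.prod * Module.finrank k ↥L3.prod) := ha
          _ ≤ _ := Nat.mul_le_mul e1 (Nat.mul_le_mul (le_refl _) e3)
      have c2 := Nat.le_of_mul_le_mul_left c1 hb1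
      exact Nat.le_of_mul_le_mul_right c2 hb3
  rw [← hL2, key, hWd]

end aux

/-- Let `A_1, …, A_n` be finite-dimensional subspaces of a finite-dimensional algebra `H`
with `H = A_1 A_2 ⋯ A_n` (span of products) and
`dim H = (dim A_1)(dim A_2)⋯(dim A_n)`.  Then for any `1 ≤ t ≤ t + l ≤ n`, the
multiplication map `A_t ⊗ A_{t+1} ⊗ ⋯ ⊗ A_{t+l} → H` is injective with range the span
`A_t A_{t+1} ⋯ A_{t+l}`, i.e. it is bijective onto that span. -/
theorem mul_map_bijective_of_dim (k H : Type*) [Field k] [Ring H] [Algebra k H]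
    [FiniteDimensional k H] (n : ℕ) (V : Fin n → Submodule k H)
    (hspan : (List.ofFn V).prod = (⊤ : Submodule k H))
    (hdim : Module.finrank k H = ∏ i, Module.finrank k (V i))
    (t l : ℕ) (h : t + l + 1 ≤ n) :
    let W : Fin (l + 1) → Submodule k H := fun i => V ⟨t + i, by have := i.isLt; omega⟩
    let f : (⨂[k] (i : Fin (l + 1)), ↥(W i)) →ₗ[k] H :=
      PiTensorProduct.lift ((MultilinearMap.mkPiAlgebraFin k (l + 1) H).compLinearMap
        fun i => (W i).subtype)
    Function.Injective f ∧ LinearMap.range f = (List.ofFn W).prod := by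
  intro W f
  classical
  have hf : ∀ x : Π i, W i,
      f (PiTensorProduct.tprod k x) = (List.ofFn fun i => ((x i : H))).prod :=
    fun x => PiTensorProduct.lift.tprod x
  have hrange : LinearMap.range f = (List.ofFn W).prod := by
    rw [LinearMap.range_eq_map, ← PiTensorProduct.span_tprod_eq_top, Submodule.map_span,
      ← Set.range_comp]
    have hcomp : (⇑f ∘ PiTensorProduct.tprod k)
        = fun x : Π i, W i => (List.ofFn fun i => ((x i : H))).prod := funext hf
    rw [hcomp, aux_span_prod]
  have hkey : Module.finrank k ↥((List.ofFn W).prod) = ∏ i, Module.finrank k (W i) :=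
    aux_key n V hspan hdim t l h W (fun i => rfl)
  haveI : Module.Finite k (⨂[k] (i : Fin (l + 1)), ↥(W i)) := aux_piTensor_finite _ W
  have hd1 : Module.finrank k (⨂[k] (i : Fin (l + 1)), ↥(W i))
      ≤ ∏ i, Module.finrank k (W i) := aux_piTensor_finrank_le _ W
  have hrn := LinearMap.finrank_range_add_finrank_ker (K := k)
    (V := ⨂[k] (i : Fin (l + 1)), ↥(W i)) (V₂ := H) f
  have hr : Module.finrank k ↥(LinearMap.range f) = ∏ i, Module.finrank k (W i) := by
    rw [hrange, hkey]
  have hker : Module.finrank k ↥(LinearMap.ker f) = 0 := by omega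
  haveI : IsNoetherian k (⨂[k] (i : Fin (l + 1)), ↥(W i)) := (IsNoetherian.iff_fg (K := k) (V := (⨂[k] (i : Fin (l + 1)), ↥(W i)))).mpr this
  refine ⟨(LinearMap.ker_eq_bot (M := (⨂[k] (i : Fin (l + 1)), ↥(W i))) (f := f)).mp ((Submodule.finrank_eq_zero (R := k) (M := (⨂[k] (i : Fin (l + 1)), ↥(W i))) (S := LinearMap.ker f)).mp (by omega)), hrange⟩
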